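/- Let S be a finite set and let μ₁, μ₂ be probability measures on {0,1}^S assigning positive probability to every configuration, with μ₁ monotone. Set A := inf over s ∈ S and ξ ∈ {0,1}^{S∖{s}} of [μ₂(σ(s)=1 | σ ≡ ξ on S∖{s}) − μ₁(σ(s)=1 | σ ≡ ξ on S∖{s})], and assume A > 0. Then for every ε ∈ (0,1) satisfying A > 1/(1−ε) − 1, one has μ₁^{(+,ε)} ≼ μ₂. -/

import Mathlib

/-!
Statement 0 (Lemma 3.1 of Broman–Steif): for a monotone, fully supported probability
measure `μ` on `{0,1}^S` (`S` finite) and `ε ∈ (0,1)`, the conditional probabilities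
of the downward (resp. upward) `ε`-perturbation satisfy
`μ^{(-,ε)}(1|ξ) ≥ (1-ε) μ(1|ξ)` and `μ^{(+,ε)}(0|ξ) ≥ (1-ε) μ(0|ξ)`.

Configurations on a finite set `S` are functions `S → Bool` (`true` = 1, `false` = 0),
probability measures are represented by their weight functions.
-/

open Finset

variable {S : Type*} [Fintype S] [DecidableEq S]

/-- `μ` is a probability weight assigning positive probability to every configuration. -/
def IsProbWeight (μ : (S → Bool) → ℝ) : Prop :=
  (∀ σ, 0 < μ σ) ∧ ∑ σ : S → Bool, μ σ = 1

/-- The conditional probability `μ(σ(s) = 1 | σ ≡ ξ off s)`. -/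
noncomputable def condOne (μ : (S → Bool) → ℝ) (s : S) (ξ : S → Bool) : ℝ :=
  μ (Function.update ξ s true) /
    (μ (Function.update ξ s true) + μ (Function.update ξ s false))

/-- The conditional probability `μ(σ(s) = 0 | σ ≡ ξ off s)`. -/
noncomputable def condZero (μ : (S → Bool) → ℝ) (s : S) (ξ : S → Bool) : ℝ :=
  μ (Function.update ξ s false) /
    (μ (Function.update ξ s true) + μ (Function.update ξ s false))

/-- `μ` is monotone: the conditional probability of a 1 at `s` is nondecreasing in the
configuration off `s`. -/
def IsMonotoneWeight (μ : (S → Bool) → ℝ) : Prop :=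
  ∀ s : S, ∀ ξ ξ' : S → Bool, (∀ t, t ≠ s → ξ t ≤ ξ' t) →
    condOne μ s ξ ≤ condOne μ s ξ'

/-- The weight function of `μ^{(-,ε)}`: the law of `s ↦ min (X s) (Z s)` where `X ∼ μ`
and, independently, the `Z s` are i.i.d. with `P(Z s = 1) = 1 - ε`. -/
noncomputable def minusEps (μ : (S → Bool) → ℝ) (ε : ℝ) : (S → Bool) → ℝ := fun η =>
  ∑ σ : S → Bool, μ σ *
    ∏ s : S, (if η s then (if σ s then 1 - ε else 0) else (if σ s then ε else 1))

/-- The weight function of `μ^{(+,ε)}`: the law of `s ↦ max (X s) (Z s)` where `X ∼ μ`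
and, independently, the `Z s` are i.i.d. with `P(Z s = 1) = ε`. -/
noncomputable def plusEps (μ : (S → Bool) → ℝ) (ε : ℝ) : (S → Bool) → ℝ := fun η =>
  ∑ σ : S → Bool, μ σ *
    ∏ s : S, (if η s then (if σ s then 1 else ε) else (if σ s then 0 else 1 - ε))

/-- Stochastic domination `μ ≼ ν` for weight functions on `{0,1}^S`, `S` finite:
`∑ f dμ ≤ ∑ f dν` for every nondecreasing `f` (coordinatewise order, `false < true`). -/
def Dominates (μ ν : (S → Bool) → ℝ) : Prop :=
  ∀ f : (S → Bool) → ℝ, Monotone f →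
    ∑ σ : S → Bool, μ σ * f σ ≤ ∑ σ : S → Bool, ν σ * f σ


namespace BS33


/-! ### Scalar lemmas -/

lemma ad2 {m0 m1 n0 n1 M0 M1 N0 N1 : ℝ} (hM0 : 0 < M0) (hM1 : 0 < M1) (hN0 : 0 < N0)
    (hN1 : 0 < N1) (hm0 : 0 ≤ m0) (hm1 : 0 ≤ m1) (hn0 : 0 ≤ n0) (hn1 : 0 ≤ n1)
    (h00 : m0 * n0 ≤ M0 * N0) (h11 : m1 * n1 ≤ M1 * N1)
    (h01 : m0 * n1 ≤ M0 * N1) (h10 : m1 * n0 ≤ M0 * N1) :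
    (m0 + m1) * (n0 + n1) ≤ (M0 + M1) * (N0 + N1) := by
  have hA : 0 ≤ (M0 * N1 - m0 * n1) * (M0 * N1 - m1 * n0) :=
    mul_nonneg (by linarith) (by linarith)
  have hB : m0 * n0 * (m1 * n1) ≤ M0 * N0 * (M1 * N1) :=
    mul_le_mul h00 h11 (mul_nonneg hm1 hn1) (by positivity)
  have hpos : (0:ℝ) < M0 * N1 := mul_pos hM0 hN1
  rw [← mul_le_mul_iff_of_pos_right hpos]
  nlinarith [mul_le_mul_of_nonneg_right h00 hpos.le, mul_le_mul_of_nonneg_right h11 hpos.le, hA, hB]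

lemma ad_cross {a0 a1 b0 b1 u0 u1 v0 v1 : ℝ} (ha0 : 0 < a0) (ha1 : 0 < a1) (hb0 : 0 < b0)
    (hb1 : 0 < b1) (hpq : a1 * b0 ≤ a0 * b1) (h00 : u0 ≤ v0) (h01 : u0 ≤ v1) (h11 : u1 ≤ v1) :
    (a0 * u0 + a1 * u1) / (a0 + a1) ≤ (b0 * v0 + b1 * v1) / (b0 + b1) := by
  rw [div_le_div_iff₀ (by linarith) (by linarith)]
  rcases le_total v0 v1 with h | h
  · nlinarith [mul_le_mul hpq (show v1 - v0 ≤ v1 - u0 by linarith) (by linarith) (by positivity),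
      mul_nonneg (mul_pos ha0 hb0).le (sub_nonneg.2 h00),
      mul_nonneg (mul_pos ha1 hb1).le (sub_nonneg.2 h11),
      mul_nonneg (mul_pos ha0 hb1).le (sub_nonneg.2 h01)]
  · nlinarith [mul_nonneg (mul_pos ha0 hb0).le (sub_nonneg.2 (le_trans h01 h)),
      mul_nonneg (mul_pos ha1 hb0).le (sub_nonneg.2 (le_trans h11 h)),
      mul_nonneg (mul_pos ha0 hb1).le (sub_nonneg.2 h01),
      mul_nonneg (mul_pos ha1 hb1).le (sub_nonneg.2 h11)]

lemma bracket {a0 a1 d0 d1 ε : ℝ} (ha0 : 0 < a0) (ha1 : 0 < a1) (hd0 : 0 < d0) (hd1 : 0 < d1)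
    (hq : a1 / (a1 + a0) + ε * (1 - a1 / (a1 + a0)) ≤ d1 / (d1 + d0)) :
    (ε * a0 + a1) * d0 ≤ (1 - ε) * a0 * d1 := by
  have e : a1 / (a1 + a0) + ε * (1 - a1 / (a1 + a0)) = (a1 + ε * a0) / (a1 + a0) := by
    field_simp
    ring
  rw [e, div_le_div_iff₀ (by linarith) (by linarith)] at hq
  nlinarith [hq]

/-! ### Sum splitting at one site -/

lemma sum_split (s : S) (f : (S → Bool) → ℝ) :
    ∑ σ : S → Bool, f σ
      = ∑ σ : S → Bool,
          (if σ s = false then f σ + f (Function.update σ s true) else 0) := by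
  classical
  rw [← Finset.sum_filter]
  rw [← Finset.sum_filter_add_sum_filter_not Finset.univ (fun σ => σ s = false) f]
  rw [Finset.sum_add_distrib]
  congr 1
  apply Finset.sum_nbij' (i := fun σ => Function.update σ s false)
    (j := fun σ => Function.update σ s true)
  · intro a ha
    simp [Function.update_self]
  · intro a ha
    simp [Function.update_self]
  · intro a ha
    simp only [Finset.mem_filter, Finset.mem_univ, true_and] at ha
    rw [Function.update_idem]
    rw [show (true : Bool) = a s by simp at ha; simp [ha]]
    exact Function.update_eq_self s a
  · intro a ha
    simp only [Finset.mem_filter, Finset.mem_univ, true_and] at ha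
    rw [Function.update_idem]
    rw [show (false : Bool) = a s from ha.symm]
    exact Function.update_eq_self s a
  · intro a ha
    simp only [Finset.mem_filter, Finset.mem_univ, true_and] at ha
    congr 1
    rw [Function.update_idem]
    rw [show (true : Bool) = a s by simp at ha; simp [ha]]
    exact (Function.update_eq_self s a).symm ▸ rfl

lemma sum_update_add (s : S) (f : (S → Bool) → ℝ) :
    ∑ σ : S → Bool, (f (Function.update σ s false) + f (Function.update σ s true))
      = 2 * ∑ σ : S → Bool, f σ := by
  rw [sum_split s f,
    sum_split s (fun σ => f (Function.update σ s false) + f (Function.update σ s true)),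
    Finset.mul_sum]
  apply Finset.sum_congr rfl
  intro σ _
  by_cases h : σ s = false
  · simp only [h, if_true]
    have h0 : Function.update σ s false = σ := by
      rw [show (false : Bool) = σ s from h.symm]; exact Function.update_eq_self s σ
    rw [Function.update_idem, Function.update_idem, h0]
    ring
  · simp [h]


/-! ### Functions invariant at every site are constant -/

lemma const_of_inv (g : (S → Bool) → ℝ)
    (h : ∀ s : S, ∀ σ b, g (Function.update σ s b) = g σ) :
    ∀ σ, g σ = g (fun _ => false) := by
  classical
  have key : ∀ n (σ : S → Bool),
      (Finset.univ.filter (fun t => σ t = true)).card = n → g σ = g (fun _ => false) := by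
    intro n
    induction n with
    | zero =>
      intro σ hσ
      have : σ = fun _ => false := by
        funext t
        by_contra hne
        have ht : σ t = true := by
          cases hval : σ t
          · exact absurd hval hne
          · rfl
        have : t ∈ Finset.univ.filter (fun t => σ t = true) := by
          simp [ht]
        rw [Finset.card_eq_zero.mp hσ] at this
        exact absurd this (Finset.notMem_empty t)
      rw [this]
    | succ n ih =>
      intro σ hσ
      have hne : (Finset.univ.filter (fun t => σ t = true)).Nonempty := by
        rw [← Finset.card_pos, hσ]; omega
      obtain ⟨t, ht⟩ := hne
      have hσt : σ t = true := (Finset.mem_filter.mp ht).2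
      have h1 : g σ = g (Function.update σ t false) := (h t σ false).symm
      rw [h1]
      apply ih
      have hset : Finset.univ.filter (fun u => Function.update σ t false u = true)
          = (Finset.univ.filter (fun u => σ u = true)).erase t := by
        ext u
        simp only [Finset.mem_filter, Finset.mem_univ, true_and, Finset.mem_erase]
        by_cases hu : u = t
        · subst hu; simp [Function.update_self]
        · simp [Function.update_of_ne hu, hu]
      rw [hset, Finset.card_erase_of_mem ht, hσ]
      omega
  exact fun σ => key _ σ rfl

/-! ### The Ahlswede–Daykin-style induction -/

lemma AD : ∀ (T : Finset S) (μ ν u v : (S → Bool) → ℝ),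
    (∀ σ, 0 < μ σ) → (∀ σ, 0 < ν σ) →
    (∀ s, s ∉ T → ∀ σ b, μ (Function.update σ s b) = μ σ) →
    (∀ s, s ∉ T → ∀ σ b, ν (Function.update σ s b) = ν σ) →
    (∀ s, s ∉ T → ∀ σ b, u (Function.update σ s b) = u σ) →
    (∀ s, s ∉ T → ∀ σ b, v (Function.update σ s b) = v σ) →
    (∀ α β : S → Bool, μ α * ν β ≤ μ (fun t => α t && β t) * ν (fun t => α t || β t)) →
    (∑ σ : S → Bool, μ σ = ∑ σ : S → Bool, ν σ) →
    (∀ α β : S → Bool, (∀ t, α t ≤ β t) → u α ≤ v β) →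
    ∑ σ : S → Bool, μ σ * u σ ≤ ∑ σ : S → Bool, ν σ * v σ := by
  intro T
  induction T using Finset.induction_on with
  | empty =>
    intro μ ν u v hμp hνp hμi hνi hui hvi hL hmass hcross
    have hu : ∀ σ, u σ = u (fun _ => false) :=
      const_of_inv u (fun s => hui s (Finset.notMem_empty s))
    have hv : ∀ σ, v σ = v (fun _ => false) :=
      const_of_inv v (fun s => hvi s (Finset.notMem_empty s))
    have huv : u (fun _ => false) ≤ v (fun _ => false) :=
      hcross _ _ (fun t => le_refl _)
    have hν0 : (0:ℝ) ≤ ∑ σ : S → Bool, ν σ :=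
      Finset.sum_nonneg (fun σ _ => (hνp σ).le)
    calc ∑ σ : S → Bool, μ σ * u σ
        = (∑ σ : S → Bool, μ σ) * u (fun _ => false) := by
          rw [Finset.sum_mul]; exact Finset.sum_congr rfl (fun σ _ => by rw [hu σ])
      _ = (∑ σ : S → Bool, ν σ) * u (fun _ => false) := by rw [hmass]
      _ ≤ (∑ σ : S → Bool, ν σ) * v (fun _ => false) :=
          mul_le_mul_of_nonneg_left huv hν0
      _ = ∑ σ : S → Bool, ν σ * v σ := by
          rw [Finset.sum_mul]; exact Finset.sum_congr rfl (fun σ _ => by rw [hv σ])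
  | @insert s T hs ih =>
    intro μ ν u v hμp hνp hμi hνi hui hvi hL hmass hcross
    classical
    set μ' : (S → Bool) → ℝ := fun σ =>
      μ (Function.update σ s false) + μ (Function.update σ s true) with hμ'def
    set ν' : (S → Bool) → ℝ := fun σ =>
      ν (Function.update σ s false) + ν (Function.update σ s true) with hν'def
    set u' : (S → Bool) → ℝ := fun σ =>
      (μ (Function.update σ s false) * u (Function.update σ s false)
        + μ (Function.update σ s true) * u (Function.update σ s true)) / μ' σ with hu'def
    set v' : (S → Bool) → ℝ := fun σ =>
      (ν (Function.update σ s false) * v (Function.update σ s false)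
        + ν (Function.update σ s true) * v (Function.update σ s true)) / ν' σ with hv'def
    have hμ'p : ∀ σ, 0 < μ' σ := fun σ => add_pos (hμp _) (hμp _)
    have hν'p : ∀ σ, 0 < ν' σ := fun σ => add_pos (hνp _) (hνp _)
    -- lattice identities for updates
    have hand : ∀ (α β : S → Bool) (i j : Bool),
        (fun t => (Function.update α s i) t && (Function.update β s j) t)
          = Function.update (fun t => α t && β t) s (i && j) := by
      intro α β i j
      funext t
      by_cases h : t = s
      · subst h; simp [Function.update_self]
      · simp [Function.update_of_ne h]
    have hor : ∀ (α β : S → Bool) (i j : Bool),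
        (fun t => (Function.update α s i) t || (Function.update β s j) t)
          = Function.update (fun t => α t || β t) s (i || j) := by
      intro α β i j
      funext t
      by_cases h : t = s
      · subst h; simp [Function.update_self]
      · simp [Function.update_of_ne h]
    -- lattice condition for μ', ν'
    have hL' : ∀ α β : S → Bool,
        μ' α * ν' β ≤ μ' (fun t => α t && β t) * ν' (fun t => α t || β t) := by
      intro α β
      have h00 := hL (Function.update α s false) (Function.update β s false)
      have h01 := hL (Function.update α s false) (Function.update β s true)
      have h10 := hL (Function.update α s true) (Function.update β s false)
      have h11 := hL (Function.update α s true) (Function.update β s true)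
      rw [hand, hor] at h00 h01 h10 h11
      simp only [Bool.and_false, Bool.and_true, Bool.or_false, Bool.or_true,
        Bool.and_self, Bool.or_self, Bool.false_and, Bool.true_and,
        Bool.false_or, Bool.true_or] at h00 h01 h10 h11
      exact ad2 (hμp _) (hμp _) (hνp _) (hνp _) (hμp _).le (hμp _).le (hνp _).le (hνp _).le
        h00 h11 h01 h10
    -- mass
    have hmass' : ∑ σ : S → Bool, μ' σ = ∑ σ : S → Bool, ν' σ := by
      rw [show (∑ σ : S → Bool, μ' σ) = 2 * ∑ σ : S → Bool, μ σ from sum_update_add s μ,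
        show (∑ σ : S → Bool, ν' σ) = 2 * ∑ σ : S → Bool, ν σ from sum_update_add s ν, hmass]
    -- cross condition for u', v'
    have hcross' : ∀ α β : S → Bool, (∀ t, α t ≤ β t) → u' α ≤ v' β := by
      intro α β hle
      have hupdle : ∀ b : Bool, ∀ t,
          (Function.update α s b) t ≤ (Function.update β s b) t := by
        intro b t
        by_cases h : t = s
        · subst h; simp [Function.update_self]
        · simp only [Function.update_of_ne h]; exact hle t
      have hpq : μ (Function.update α s true) * ν (Function.update β s false)
          ≤ μ (Function.update α s false) * ν (Function.update β s true) := by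
        have h := hL (Function.update α s true) (Function.update β s false)
        rw [hand, hor] at h
        simp only [Bool.true_and, Bool.and_false, Bool.true_or, Bool.or_false] at h
        have eand : Function.update (fun t => α t && β t) s false
            = Function.update α s false := by
          funext t
          by_cases ht : t = s
          · subst ht; simp [Function.update_self]
          · simp only [Function.update_of_ne ht]
            have := hle t
            cases hα : α t
            · simp
            · rw [hα] at this
              have : β t = true := by
                cases hβ : β t
                · rw [hβ] at this; exact absurd this (by decide)
                · rfl
              simp [this]
        have eor : Function.update (fun t => α t || β t) s true
            = Function.update β s true := by
          funext t
          by_cases ht : t = s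
          · subst ht; simp [Function.update_self]
          · simp only [Function.update_of_ne ht]
            have := hle t
            cases hα : α t
            · simp
            · rw [hα] at this
              have : β t = true := by
                cases hβ : β t
                · rw [hβ] at this; exact absurd this (by decide)
                · rfl
              simp [this]
        rw [eand, eor] at h
        exact h
      have c00 : u (Function.update α s false) ≤ v (Function.update β s false) :=
        hcross _ _ (hupdle false)
      have c11 : u (Function.update α s true) ≤ v (Function.update β s true) :=
        hcross _ _ (hupdle true)
      have c01 : u (Function.update α s false) ≤ v (Function.update β s true) := by
        apply hcross
        intro t
        by_cases h : t = s
        · subst h; simp [Function.update_self]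
        · simp only [Function.update_of_ne h]; exact hle t
      exact ad_cross (hμp _) (hμp _) (hνp _) (hνp _) hpq c00 c01 c11
    -- invariance
    have hμi' : ∀ t, t ∉ T → ∀ σ b, μ' (Function.update σ t b) = μ' σ := by
      intro t ht σ b
      by_cases hts : t = s
      · subst hts
        simp only [hμ'def, Function.update_idem]
      · have htT : t ∉ insert s T := by simp [hts, ht]
        simp only [hμ'def]
        rw [Function.update_comm hts, Function.update_comm hts,
          hμi t htT, hμi t htT]
    have hνi' : ∀ t, t ∉ T → ∀ σ b, ν' (Function.update σ t b) = ν' σ := by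
      intro t ht σ b
      by_cases hts : t = s
      · subst hts
        simp only [hν'def, Function.update_idem]
      · have htT : t ∉ insert s T := by simp [hts, ht]
        simp only [hν'def]
        rw [Function.update_comm hts, Function.update_comm hts,
          hνi t htT, hνi t htT]
    have hui' : ∀ t, t ∉ T → ∀ σ b, u' (Function.update σ t b) = u' σ := by
      intro t ht σ b
      by_cases hts : t = s
      · subst hts
        simp only [hu'def, hμ'def, Function.update_idem]
      · have htT : t ∉ insert s T := by simp [hts, ht]
        simp only [hu'def, hμ'def]
        rw [Function.update_comm hts, Function.update_comm hts,
          hμi t htT, hμi t htT, hui t htT, hui t htT]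
    have hvi' : ∀ t, t ∉ T → ∀ σ b, v' (Function.update σ t b) = v' σ := by
      intro t ht σ b
      by_cases hts : t = s
      · subst hts
        simp only [hv'def, hν'def, Function.update_idem]
      · have htT : t ∉ insert s T := by simp [hts, ht]
        simp only [hv'def, hν'def]
        rw [Function.update_comm hts, Function.update_comm hts,
          hνi t htT, hνi t htT, hvi t htT, hvi t htT]
    have hIH := ih μ' ν' u' v' hμ'p hν'p hμi' hνi' hui' hvi' hL' hmass' hcross'
    -- relate the primed sums to the original sums
    have hμu : ∑ σ : S → Bool, μ' σ * u' σ = 2 * ∑ σ : S → Bool, μ σ * u σ := by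
      rw [show (2 * ∑ σ : S → Bool, μ σ * u σ)
          = ∑ σ : S → Bool, (μ (Function.update σ s false) * u (Function.update σ s false)
            + μ (Function.update σ s true) * u (Function.update σ s true)) from
        (sum_update_add s (fun σ => μ σ * u σ)).symm]
      apply Finset.sum_congr rfl
      intro σ _
      rw [hu'def]
      rw [mul_comm, div_mul_cancel₀]
      exact (hμ'p σ).ne'
    have hνv : ∑ σ : S → Bool, ν' σ * v' σ = 2 * ∑ σ : S → Bool, ν σ * v σ := by
      rw [show (2 * ∑ σ : S → Bool, ν σ * v σ)
          = ∑ σ : S → Bool, (ν (Function.update σ s false) * v (Function.update σ s false)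
            + ν (Function.update σ s true) * v (Function.update σ s true)) from
        (sum_update_add s (fun σ => ν σ * v σ)).symm]
      apply Finset.sum_congr rfl
      intro σ _
      rw [hv'def]
      rw [mul_comm, div_mul_cancel₀]
      exact (hν'p σ).ne'
    rw [hμu, hνv] at hIH
    linarith

/-! ### Bool helpers -/

lemma bool_not_le {a b : Bool} (h : ¬ (a ≤ b)) : a = true ∧ b = false := by
  cases a <;> cases b <;> revert h <;> decide

lemma bool_le_true_of {a b : Bool} (h : a ≤ b) (ha : a = true) : b = true := by
  cases a <;> cases b <;> revert h <;> simp_all <;> decide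


/-! ### Positivity and normalization of `plusEps` -/

lemma plusEps_pos {μ : (S → Bool) → ℝ} (hμ : ∀ σ, 0 < μ σ) {ε : ℝ} (hε0 : 0 < ε)
    (hε1 : ε < 1) (η : S → Bool) : 0 < plusEps μ ε η := by
  simp only [plusEps]
  apply Finset.sum_pos'
  · intro σ _
    apply mul_nonneg (hμ σ).le
    apply Finset.prod_nonneg
    intro t _
    split_ifs <;> linarith
  · refine ⟨η, Finset.mem_univ η, ?_⟩
    apply mul_pos (hμ η)
    apply Finset.prod_pos
    intro t _
    by_cases h : η t
    · simp [h]
    · simp [h]; linarith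

lemma plusEps_sum {μ : (S → Bool) → ℝ} (hsum : ∑ σ : S → Bool, μ σ = 1) (ε : ℝ) :
    ∑ η : S → Bool, plusEps μ ε η = 1 := by
  simp only [plusEps]
  rw [Finset.sum_comm]
  have key : ∀ σ : S → Bool, (∑ η : S → Bool,
      μ σ * ∏ t : S, (if η t then (if σ t then (1:ℝ) else ε) else (if σ t then 0 else 1 - ε)))
      = μ σ := by
    intro σ
    rw [← Finset.mul_sum]
    have h1 : (∑ η : S → Bool, ∏ t : S,
          (if η t then (if σ t then (1:ℝ) else ε) else (if σ t then 0 else 1 - ε)))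
        = ∏ t : S, ∑ b : Bool,
            (if b then (if σ t then (1:ℝ) else ε) else (if σ t then 0 else 1 - ε)) := by
      rw [Finset.prod_univ_sum (fun _ => (Finset.univ : Finset Bool))
        (fun t b => if b then (if σ t then (1:ℝ) else ε) else (if σ t then 0 else 1 - ε))]
      rw [Fintype.piFinset_univ]
    rw [h1]
    have h2 : ∀ t : S, (∑ b : Bool,
        (if b then (if σ t then (1:ℝ) else ε) else (if σ t then 0 else 1 - ε))) = 1 := by
      intro t
      rw [Fintype.sum_bool]
      cases h : σ t <;> norm_num
    rw [Finset.prod_congr rfl (fun t _ => h2 t), Finset.prod_const_one, mul_one]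
  rw [Finset.sum_congr rfl (fun σ _ => key σ), hsum]

/-! ### condOne facts -/

lemma condOne_nonneg {μ : (S → Bool) → ℝ} (hμ : ∀ σ, 0 < μ σ) (s : S) (ξ : S → Bool) :
    0 ≤ condOne μ s ξ :=
  div_nonneg (hμ _).le (add_pos (hμ _) (hμ _)).le

lemma condOne_le_one {μ : (S → Bool) → ℝ} (hμ : ∀ σ, 0 < μ σ) (s : S) (ξ : S → Bool) :
    condOne μ s ξ ≤ 1 := by
  unfold condOne
  rw [div_le_one (add_pos (hμ _) (hμ _))]
  linarith [hμ (Function.update ξ s false)]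

/-! ### From the single-site cross condition to the full lattice condition -/

lemma lattice (μ ν : (S → Bool) → ℝ) (hμ : ∀ σ, 0 < μ σ) (hν : ∀ σ, 0 < ν σ)
    (hcross : ∀ (s : S) (ξ ξ' : S → Bool), (∀ t, ξ t ≤ ξ' t) →
      μ (Function.update ξ s true) * ν (Function.update ξ' s false)
        ≤ μ (Function.update ξ s false) * ν (Function.update ξ' s true)) :
    ∀ α β : S → Bool, μ α * ν β ≤ μ (fun t => α t && β t) * ν (fun t => α t || β t) := by
  classical
  have key : ∀ n (α β : S → Bool),
      (Finset.univ.filter (fun t => α t = true ∧ β t = false)).card = n →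
      μ α * ν β ≤ μ (fun t => α t && β t) * ν (fun t => α t || β t) := by
    intro n
    induction n with
    | zero =>
      intro α β hcard
      have hle : ∀ t, α t ≤ β t := by
        intro t
        by_contra hc
        obtain ⟨h1, h2⟩ := bool_not_le hc
        have : t ∈ Finset.univ.filter (fun t => α t = true ∧ β t = false) := by
          simp [h1, h2]
        rw [Finset.card_eq_zero.mp hcard] at this
        exact absurd this (Finset.notMem_empty t)
      have e1 : (fun t => α t && β t) = α := by
        funext t
        cases hα : α t
        · simp
        · simp [bool_le_true_of (hle t) hα]
      have e2 : (fun t => α t || β t) = β := by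
        funext t
        cases hα : α t
        · simp
        · simp [bool_le_true_of (hle t) hα]
      rw [e1, e2]
    | succ n ih =>
      intro α β hcard
      have hne : (Finset.univ.filter (fun t => α t = true ∧ β t = false)).Nonempty := by
        rw [← Finset.card_pos, hcard]; omega
      obtain ⟨s, hs⟩ := hne
      obtain ⟨hαs, hβs⟩ : α s = true ∧ β s = false := by
        simpa using (Finset.mem_filter.mp hs).2
      set α' : S → Bool := Function.update α s false with hα'
      have hcr := hcross s α (fun t => α t || β t)
        (fun t => by cases h : α t <;> simp [h])
      have e1 : Function.update α s true = α := by
        rw [show (true : Bool) = α s from hαs.symm]; exact Function.update_eq_self s α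
      have e2 : Function.update (fun t => α t || β t) s true = fun t => α t || β t := by
        rw [show (true : Bool) = (α s || β s) by simp [hαs]]
        exact Function.update_eq_self s _
      have e3 : Function.update (fun t => α t || β t) s false = fun t => α' t || β t := by
        funext t
        by_cases ht : t = s
        · subst ht; simp [Function.update_self, hβs, hα']
        · simp [Function.update_of_ne ht, hα']
      rw [e1, e2, e3] at hcr
      -- hcr : μ α * ν (α' ∨ β) ≤ μ α' * ν (α ∨ β)
      have hcard' :
          (Finset.univ.filter (fun t => α' t = true ∧ β t = false)).card = n := by
        have hset : Finset.univ.filter (fun t => α' t = true ∧ β t = false)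
            = (Finset.univ.filter (fun t => α t = true ∧ β t = false)).erase s := by
          ext t
          simp only [Finset.mem_filter, Finset.mem_univ, true_and, Finset.mem_erase]
          by_cases ht : t = s
          · subst ht; simp [hα', Function.update_self]
          · simp [hα', Function.update_of_ne ht, ht]
        rw [hset, Finset.card_erase_of_mem hs, hcard]
        omega
      have hIH := ih α' β hcard'
      have e4 : (fun t => α' t && β t) = (fun t => α t && β t) := by
        funext t
        by_cases ht : t = s
        · subst ht; simp [hα', Function.update_self, hαs, hβs]
        · simp [hα', Function.update_of_ne ht]
      rw [e4] at hIH
      -- hIH : μ α' * ν β ≤ μ (α ∧ β) * ν (α' ∨ β)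
      have hc : (0:ℝ) < μ α' * ν (fun t => α' t || β t) := mul_pos (hμ _) (hν _)
      have hmul := mul_le_mul hcr hIH (mul_pos (hμ _) (hν _)).le (mul_pos (hμ _) (hν _)).le
      refine le_of_mul_le_mul_right ?_ hc
      calc μ α * ν β * (μ α' * ν (fun t => α' t || β t))
          = (μ α * ν (fun t => α' t || β t)) * (μ α' * ν β) := by ring
        _ ≤ (μ α' * ν (fun t => α t || β t))
              * (μ (fun t => α t && β t) * ν (fun t => α' t || β t)) := hmul
        _ = μ (fun t => α t && β t) * ν (fun t => α t || β t)
              * (μ α' * ν (fun t => α' t || β t)) := by ring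
  exact fun α β => key _ α β rfl

end BS33



namespace BS33

/-! ### The single-site cross condition for `plusEps μ₁ ε` versus `μ₂` -/

lemma cross_plus {μ₁ μ₂ : (S → Bool) → ℝ} {ε : ℝ}
    (hμ₁ : ∀ σ, 0 < μ₁ σ) (hμ₂ : ∀ σ, 0 < μ₂ σ)
    (hmono : IsMonotoneWeight μ₁)
    (hε0 : 0 < ε) (hε1 : ε < 1)
    {A : ℝ}
    (hAle : ∀ (s : S) (ξ : S → Bool), A ≤ condOne μ₂ s ξ - condOne μ₁ s ξ)
    (hεA : ε / (1 - ε) < A) :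
    ∀ (s : S) (ξ ξ' : S → Bool), (∀ t, ξ t ≤ ξ' t) →
      plusEps μ₁ ε (Function.update ξ s true) * μ₂ (Function.update ξ' s false)
        ≤ plusEps μ₁ ε (Function.update ξ s false) * μ₂ (Function.update ξ' s true) := by
  intro s ξ ξ' hξ
  classical
  set d0 := μ₂ (Function.update ξ' s false) with hd0
  set d1 := μ₂ (Function.update ξ' s true) with hd1
  simp only [plusEps]
  rw [Finset.sum_mul, Finset.sum_mul]
  rw [sum_split s (fun σ => μ₁ σ * (∏ t : S, (if Function.update ξ s true t
        then (if σ t then (1:ℝ) else ε) else (if σ t then 0 else 1 - ε))) * d0),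
      sum_split s (fun σ => μ₁ σ * (∏ t : S, (if Function.update ξ s false t
        then (if σ t then (1:ℝ) else ε) else (if σ t then 0 else 1 - ε))) * d1)]
  apply Finset.sum_le_sum
  intro σ _
  by_cases hσs : σ s = false
  · rw [if_pos hσs, if_pos hσs]
    set K : ℝ := ∏ t ∈ Finset.univ.erase s,
      (if ξ t then (if σ t then (1:ℝ) else ε) else (if σ t then 0 else 1 - ε)) with hK
    have hσ0 : Function.update σ s false = σ := by
      rw [show (false : Bool) = σ s from hσs.symm]; exact Function.update_eq_self s σ
    have hprod : ∀ (a : Bool) (τ : S → Bool), (∀ t, t ≠ s → τ t = σ t) →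
        (∏ t : S, (if Function.update ξ s a t then (if τ t then (1:ℝ) else ε)
            else (if τ t then 0 else 1 - ε)))
        = (if a then (if τ s then (1:ℝ) else ε) else (if τ s then 0 else 1 - ε)) * K := by
      intro a τ hτ
      rw [← Finset.mul_prod_erase Finset.univ _ (Finset.mem_univ s)]
      congr 1
      · rw [Function.update_self]
      · apply Finset.prod_congr rfl
        intro t ht
        have hts : t ≠ s := Finset.ne_of_mem_erase ht
        rw [Function.update_of_ne hts, hτ t hts]
    have e1 : (∏ t : S, (if Function.update ξ s true t then (if σ t then (1:ℝ) else ε)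
        else (if σ t then 0 else 1 - ε))) = ε * K := by
      rw [hprod true σ (fun t _ => rfl), hσs]; norm_num
    have e2 : (∏ t : S, (if Function.update ξ s true t
        then (if Function.update σ s true t then (1:ℝ) else ε)
        else (if Function.update σ s true t then 0 else 1 - ε))) = K := by
      rw [hprod true (Function.update σ s true) (fun t hts => Function.update_of_ne hts _ _),
        Function.update_self]
      norm_num
    have e3 : (∏ t : S, (if Function.update ξ s false t then (if σ t then (1:ℝ) else ε)
        else (if σ t then 0 else 1 - ε))) = (1 - ε) * K := by
      rw [hprod false σ (fun t _ => rfl), hσs]; norm_num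
    have e4 : (∏ t : S, (if Function.update ξ s false t
        then (if Function.update σ s true t then (1:ℝ) else ε)
        else (if Function.update σ s true t then 0 else 1 - ε))) = 0 := by
      rw [hprod false (Function.update σ s true) (fun t hts => Function.update_of_ne hts _ _),
        Function.update_self]
      norm_num
    rw [e1, e2, e3, e4]
    have hKnonneg : 0 ≤ K := by
      rw [hK]
      apply Finset.prod_nonneg
      intro t _
      split_ifs <;> linarith
    rcases eq_or_lt_of_le hKnonneg with hK0 | hKpos
    · rw [← hK0]
      ring_nf
      simp
    · have hσξ : ∀ t, t ≠ s → σ t ≤ ξ t := by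
        intro t hts
        by_contra hc
        obtain ⟨h1, h2⟩ := bool_not_le hc
        have hzero : K = 0 := by
          rw [hK]
          apply Finset.prod_eq_zero (Finset.mem_erase.mpr ⟨hts, Finset.mem_univ t⟩)
          rw [h1, h2]
          norm_num
        rw [hzero] at hKpos
        exact absurd hKpos (lt_irrefl 0)
      have hσξ' : ∀ t, t ≠ s → σ t ≤ ξ' t := fun t hts => le_trans (hσξ t hts) (hξ t)
      have h1 : condOne μ₁ s σ ≤ condOne μ₁ s ξ' := hmono s σ ξ' hσξ'
      have h2 : A ≤ condOne μ₂ s ξ' - condOne μ₁ s ξ' := hAle s ξ'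
      have hp0 : 0 ≤ condOne μ₁ s σ := condOne_nonneg hμ₁ s σ
      have hp1 : condOne μ₁ s σ ≤ 1 := condOne_le_one hμ₁ s σ
      have hεε : ε ≤ ε / (1 - ε) := by
        rw [le_div_iff₀ (by linarith)]
        nlinarith
      have hq' : condOne μ₁ s σ + ε * (1 - condOne μ₁ s σ) ≤ condOne μ₂ s ξ' := by
        have hh : ε * (1 - condOne μ₁ s σ) ≤ ε := by nlinarith
        linarith
      have hpeq : condOne μ₁ s σ
          = μ₁ (Function.update σ s true) / (μ₁ (Function.update σ s true) + μ₁ σ) := by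
        unfold condOne
        rw [hσ0]
      have hqeq : condOne μ₂ s ξ' = d1 / (d1 + d0) := rfl
      rw [hpeq, hqeq] at hq'
      have hbr := bracket (hμ₁ σ) (hμ₁ (Function.update σ s true))
        (show (0:ℝ) < d0 from hμ₂ _) (show (0:ℝ) < d1 from hμ₂ _) hq'
      nlinarith [mul_le_mul_of_nonneg_left hbr hKnonneg]
  · rw [if_neg hσs, if_neg hσs]

end BS33

theorem lemma33' (μ₁ μ₂ : (S → Bool) → ℝ) (h₁ : IsProbWeight μ₁) (h₂ : IsProbWeight μ₂)
    (hmono : IsMonotoneWeight μ₁) (A : ℝ)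
    (hA : A = sInf {x : ℝ | ∃ (s : S) (ξ : S → Bool), x = condOne μ₂ s ξ - condOne μ₁ s ξ})
    (hApos : 0 < A) (ε : ℝ) (hε : ε ∈ Set.Ioo (0 : ℝ) 1)
    (hεA : 1 / (1 - ε) - 1 < A) :
    Dominates (plusEps μ₁ ε) μ₂ := by
  obtain ⟨hμ₁pos, hμ₁sum⟩ := h₁
  obtain ⟨hμ₂pos, hμ₂sum⟩ := h₂
  obtain ⟨hε0, hε1⟩ := hε
  have hAle : ∀ (s : S) (ξ : S → Bool), A ≤ condOne μ₂ s ξ - condOne μ₁ s ξ := by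
    intro s ξ
    rw [hA]
    apply csInf_le
    · have he : {x : ℝ | ∃ (s : S) (ξ : S → Bool), x = condOne μ₂ s ξ - condOne μ₁ s ξ}
          = Set.range (fun p : S × (S → Bool) => condOne μ₂ p.1 p.2 - condOne μ₁ p.1 p.2) := by
        ext x
        constructor
        · rintro ⟨s, ξ, rfl⟩; exact ⟨(s, ξ), rfl⟩
        · rintro ⟨⟨s, ξ⟩, rfl⟩; exact ⟨s, ξ, rfl⟩
      rw [he]
      exact (Set.finite_range _).bddBelow
    · exact ⟨s, ξ, rfl⟩
  have hεA' : ε / (1 - ε) < A := by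
    have hne : (1:ℝ) - ε ≠ 0 := by linarith
    have h : 1 / (1 - ε) - 1 = ε / (1 - ε) := by
      field_simp
      ring
    rw [h] at hεA
    exact hεA
  have hcross := BS33.cross_plus hμ₁pos hμ₂pos hmono hε0 hε1 hAle hεA'
  have hL := BS33.lattice (plusEps μ₁ ε) μ₂
    (BS33.plusEps_pos hμ₁pos hε0 hε1) hμ₂pos hcross
  intro f hf
  exact BS33.AD Finset.univ (plusEps μ₁ ε) μ₂ f f
    (BS33.plusEps_pos hμ₁pos hε0 hε1) hμ₂pos
    (fun s hs => absurd (Finset.mem_univ s) hs)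
    (fun s hs => absurd (Finset.mem_univ s) hs)
    (fun s hs => absurd (Finset.mem_univ s) hs)
    (fun s hs => absurd (Finset.mem_univ s) hs)
    hL
    ((BS33.plusEps_sum hμ₁sum ε).trans hμ₂sum.symm)
    (fun α β h => hf (Pi.le_def.mpr h))
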